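/- Let a ∈ (0, 2/3] and p ∈ (0,1), and let f ∈ U_+. Then for any x, y ∈ [0, 1/(1−a)] with f(x) = f(y), almost surely τ_x = τ_y and f(X_{n∧τ_x}^x) = f(X_{n∧τ_y}^y) for every n ≥ 1 (both chains being driven by the same innovation sequence (ξ_n)). -/

import Mathlib

open MeasureTheory Filter Set ProbabilityTheory
open scoped ENNReal Classical Topology

noncomputable section

/-- The map `T_a` (extended to a total function; on the paper's domain it agrees with `T_a`,
and `T_{2/3}(1) = 0`). -/
def Tmap (a x : ℝ) : ℝ := if x < 1 then (x + 1) / a else (x - 1) / a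

/-- `κ_a(x) ∈ ℕ∞`: the first entry time of the orbit of `x` under `T_a` into the hole
`I_a = ((2a-1)/(1-a), 1)`. -/
def kappa (a x : ℝ) : ℕ∞ :=
  ⨅ (k : ℕ) (_ : (Tmap a)^[k] x ∈ Set.Ioo ((2 * a - 1) / (1 - a)) 1), (k : ℕ∞)

/-- `δ_k(x)` -/
def deltaF (a x : ℝ) (k : ℕ) : ℝ := if (Tmap a)^[k] x < 1 then 1 else 0

/-- `L_k(x)` -/
def Lnat (a x : ℝ) (k : ℕ) : ℕ :=
  ((Finset.range k).filter fun i => (Tmap a)^[i] x < 1).card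

/-- the `k`-th term of the series `∑_{k=0}^{κ_a(x)} δ_k(x) (p/λ)^{k+1} (q/p)^{L_k(x)}` -/
def lamTerm (a p x lam : ℝ) (k : ℕ) : ℝ :=
  if (k : ℕ∞) ≤ kappa a x then
    deltaF a x k * (p / lam) ^ (k + 1) * ((1 - p) / p) ^ (Lnat a x k)
  else 0

/-- `λ` is a positive solution of the equation defining `λ_a`. -/
def IsLamSol (a p lam : ℝ) : Prop := 0 < lam ∧ HasSum (lamTerm a p 0 lam) 1

/-- `V(x) = ∑_{k=0}^{κ_a} (p/λ_a)^k (q/p)^{L_k} 1{T_a^k(0) ≤ x}` -/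
def Vfun (a p lam x : ℝ) : ℝ :=
  ∑' k : ℕ, if (k : ℕ∞) ≤ kappa a 0 ∧ (Tmap a)^[k] 0 ≤ x then
    (p / lam) ^ k * ((1 - p) / p) ^ (Lnat a 0 k) else 0

/-- `F̄_a(y) = ∑_{k=0}^{κ_a(y)} δ_k(y) (p/λ_a)^{k+1} (q/p)^{L_k(y)}`. -/
def Fbar (a p lam y : ℝ) : ℝ := ∑' k, lamTerm a p y lam k

/-- Membership in the class `U_+` of positive saltus functions supported on the orbit of `0`. -/
def UplusMem (a : ℝ) (f : ℝ → ℝ) : Prop :=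
  ∃ u : ℕ → ℝ, (∀ k : ℕ, (k : ℕ∞) ≤ kappa a 0 → 0 < u k) ∧
    Summable (fun k : ℕ => if (k : ℕ∞) ≤ kappa a 0 then u k else 0) ∧
    ∀ x : ℝ, f x = ∑' k : ℕ, if (k : ℕ∞) ≤ kappa a 0 ∧ (Tmap a)^[k] 0 ≤ x then u k else 0

lemma myKappaLe (a x : ℝ) (k : ℕ) :
    (k : ℕ∞) ≤ kappa a x ↔
      ∀ j < k, (Tmap a)^[j] x ∉ Set.Ioo ((2 * a - 1) / (1 - a)) 1 := by
  constructor
  · intro h j hj hmem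
    have h1 : kappa a x ≤ (j : ℕ∞) := iInf₂_le j hmem
    have h2 : (k : ℕ∞) ≤ (j : ℕ∞) := h.trans h1
    have : k ≤ j := by exact_mod_cast h2
    omega
  · intro h
    refine le_iInf₂ fun j hmem => ?_
    by_contra hlt
    push_neg at hlt
    have : j < k := by exact_mod_cast hlt
    exact h j this hmem

lemma myKappaSucc (a : ℝ) (k : ℕ) (hk : (k : ℕ∞) ≤ kappa a 0)
    (hmem : (Tmap a)^[k] 0 ∉ Set.Ioo ((2 * a - 1) / (1 - a)) 1) :
    ((k + 1 : ℕ) : ℕ∞) ≤ kappa a 0 := by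
  rw [myKappaLe] at hk ⊢
  intro j hj
  rcases Nat.lt_succ_iff_lt_or_eq.mp hj with h | h
  · exact hk j h
  · subst h; exact hmem

lemma myOrbitIcc {a : ℝ} (ha : a ∈ Set.Ioc (0:ℝ) (2/3)) :
    ∀ k : ℕ, (k : ℕ∞) ≤ kappa a 0 → (Tmap a)^[k] 0 ∈ Set.Icc (0:ℝ) (1/(1-a)) := by
  obtain ⟨ha0, ha23⟩ := ha
  have h1a : (0:ℝ) < 1 - a := by linarith
  intro k
  induction k with
  | zero =>
    intro _
    simp only [Function.iterate_zero_apply]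
    constructor
    · exact le_refl 0
    · positivity
  | succ k ih =>
    intro hk
    have hk' : (k : ℕ∞) ≤ kappa a 0 := le_trans (by exact_mod_cast Nat.le_succ k) hk
    have hmem : (Tmap a)^[k] 0 ∉ Set.Ioo ((2 * a - 1) / (1 - a)) 1 := by
      rw [myKappaLe] at hk
      exact hk k (Nat.lt_succ_self k)
    obtain ⟨ht0, htM⟩ := ih hk'
    have htM' : (Tmap a)^[k] 0 * (1 - a) ≤ 1 := by
      rw [← le_div_iff₀ h1a]; exact htM
    rw [Function.iterate_succ_apply', Tmap]
    by_cases h1 : (Tmap a)^[k] 0 < 1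
    · rw [if_pos h1]
      have hlo : ¬ ((2 * a - 1) / (1 - a) < (Tmap a)^[k] 0) := fun h => hmem ⟨h, h1⟩
      push_neg at hlo
      have hlo' : (Tmap a)^[k] 0 * (1 - a) ≤ 2 * a - 1 := (le_div_iff₀ h1a).mp hlo
      constructor
      · positivity
      · rw [div_le_div_iff₀ ha0 h1a]; nlinarith
    · rw [if_neg h1]
      push_neg at h1
      constructor
      · apply div_nonneg (by linarith) ha0.le
      · rw [div_le_div_iff₀ ha0 h1a]; nlinarith

lemma myDyadic (k : ℕ) : ∃ c : ℤ, (Tmap (2/3))^[k] 0 * 2 ^ k = 3 * (c : ℝ) := by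
  induction k with
  | zero => exact ⟨0, by simp⟩
  | succ k ih =>
    obtain ⟨c, hc⟩ := ih
    rw [Function.iterate_succ_apply', Tmap]
    by_cases h1 : (Tmap (2/3))^[k] 0 < 1
    · refine ⟨3 * c + 2 ^ k, ?_⟩
      rw [if_pos h1]
      push_cast
      field_simp
      rw [pow_succ]
      linear_combination 2 * hc
    · refine ⟨3 * c - 2 ^ k, ?_⟩
      rw [if_neg h1]
      push_cast
      field_simp
      rw [pow_succ]
      linear_combination 2 * hc

lemma myOrbitNeOne (k : ℕ) : (Tmap (2/3))^[k] 0 ≠ 1 := by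
  intro h
  obtain ⟨c, hc⟩ := myDyadic k
  rw [h, one_mul] at hc
  have h2 : ((2:ℤ)) ^ k = 3 * c := by exact_mod_cast hc
  have h3 : (3:ℤ) ∣ 2 ^ k := ⟨c, h2⟩
  have h4 : ((3:ℕ):ℤ) ∣ ((2 ^ k : ℕ) : ℤ) := by push_cast; exact h3
  rw [Int.natCast_dvd_natCast] at h4
  have := Nat.Prime.dvd_of_dvd_pow (p := 3) (by norm_num) h4
  norm_num at this

/-- if `t_k` is at or below the hole, then `t_k < 1` -/
lemma myLtOne {a : ℝ} (ha : a ∈ Set.Ioc (0:ℝ) (2/3)) (k : ℕ)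
    (h : (Tmap a)^[k] 0 ≤ (2 * a - 1) / (1 - a)) : (Tmap a)^[k] 0 < 1 := by
  obtain ⟨ha0, ha23⟩ := ha
  have h1a : (0:ℝ) < 1 - a := by linarith
  rcases eq_or_lt_of_le ha23 with heq | hlt
  · subst heq
    have hlo : (2 * (2/3 : ℝ) - 1) / (1 - 2/3) = 1 := by norm_num
    rw [hlo] at h
    exact lt_of_le_of_ne h (myOrbitNeOne k)
  · have : (2 * a - 1) / (1 - a) < 1 := by
      rw [div_lt_one h1a]; linarith
    linarith

lemma myStep {a : ℝ} (ha : a ∈ Set.Ioc (0:ℝ) (2/3)) (e : ℝ) (he : e = 1 ∨ e = -1)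
    {z w : ℝ} (hz : z ∈ Set.Icc (0:ℝ) (1/(1-a))) (hw : w ∈ Set.Icc (0:ℝ) (1/(1-a)))
    (hc : ∀ k : ℕ, (k : ℕ∞) ≤ kappa a 0 → ((Tmap a)^[k] 0 ≤ z ↔ (Tmap a)^[k] 0 ≤ w)) :
    (a*z+e < 0 ↔ a*w+e < 0) ∧
    (0 ≤ a*z+e → (a*z+e ∈ Set.Icc (0:ℝ) (1/(1-a)) ∧ a*w+e ∈ Set.Icc (0:ℝ) (1/(1-a)) ∧
      ∀ k : ℕ, (k : ℕ∞) ≤ kappa a 0 →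
        ((Tmap a)^[k] 0 ≤ a*z+e ↔ (Tmap a)^[k] 0 ≤ a*w+e))) := by
  obtain ⟨ha0, ha23⟩ := ha
  have h1a : (0:ℝ) < 1 - a := by linarith
  obtain ⟨hz0, hzM⟩ := hz
  obtain ⟨hw0, hwM⟩ := hw
  have hzM' : z * (1 - a) ≤ 1 := (le_div_iff₀ h1a).mp hzM
  have hwM' : w * (1 - a) ≤ 1 := (le_div_iff₀ h1a).mp hwM
  rcases he with he | he <;> subst he
  · -- e = 1
    refine ⟨?_, fun _ => ⟨⟨by nlinarith, ?_⟩, ⟨by nlinarith, ?_⟩, ?_⟩⟩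
    · constructor <;> intro h <;> nlinarith
    · rw [le_div_iff₀ h1a]; nlinarith [mul_le_mul_of_nonneg_left hzM' ha0.le]
    · rw [le_div_iff₀ h1a]; nlinarith [mul_le_mul_of_nonneg_left hwM' ha0.le]
    · intro k hk
      by_cases h1 : (Tmap a)^[k] 0 < 1
      · constructor <;> intro _ <;> nlinarith
      · push_neg at h1
        have hmem : (Tmap a)^[k] 0 ∉ Set.Ioo ((2*a-1)/(1-a)) 1 := fun hm => absurd hm.2 (not_lt.mpr h1)
        have hk1 : ((k+1 : ℕ) : ℕ∞) ≤ kappa a 0 := myKappaSucc a k hk hmem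
        have hT : (Tmap a)^[k+1] 0 = ((Tmap a)^[k] 0 - 1) / a := by
          rw [Function.iterate_succ_apply', Tmap, if_neg (not_lt.mpr h1)]
        have hiff := hc (k+1) hk1
        rw [hT, div_le_iff₀ ha0, div_le_iff₀ ha0] at hiff
        constructor <;> intro h
        · have : (Tmap a)^[k] 0 - 1 ≤ z * a := by linarith [mul_comm z a]
          have := hiff.mp this
          nlinarith [this]
        · have : (Tmap a)^[k] 0 - 1 ≤ w * a := by linarith [mul_comm w a]
          have := hiff.mpr this
          nlinarith [this]
  · -- e = -1
    have exit_iff : (a*z + -1 < 0 ↔ a*w + -1 < 0) := by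
      by_cases h1κ : ((1:ℕ) : ℕ∞) ≤ kappa a 0
      · have hT1 : (Tmap a)^[1] 0 = 1 / a := by
          simp [Tmap, zero_lt_one]
        have hiff := hc 1 h1κ
        rw [hT1] at hiff
        rw [div_le_iff₀ ha0, div_le_iff₀ ha0] at hiff
        constructor <;> intro h
        · by_contra hcon
          push_neg at hcon
          have : (1:ℝ) ≤ w * a := by linarith [mul_comm a w]
          have := hiff.mpr this
          nlinarith
        · by_contra hcon
          push_neg at hcon
          have : (1:ℝ) ≤ z * a := by linarith [mul_comm a z]
          have := hiff.mp this
          nlinarith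
      · -- kappa = 0, so 0 is in the hole, so 2a-1 < 0, so M < 1/a
        rw [myKappaLe] at h1κ
        push_neg at h1κ
        obtain ⟨j, hj, hmem⟩ := h1κ
        interval_cases j
        simp only [Function.iterate_zero_apply] at hmem
        have hlo : (2*a-1)/(1-a) < 0 := hmem.1
        have h2a : 2*a - 1 < 0 := by
          by_contra hcon
          push_neg at hcon
          exact absurd hlo (not_lt.mpr (div_nonneg (by linarith) h1a.le))
        constructor <;> intro _ <;> nlinarith
    refine ⟨exit_iff, fun h0 => ?_⟩
    have hw0' : 0 ≤ a*w + -1 := by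
      by_contra hcon
      push_neg at hcon
      exact absurd (exit_iff.mpr hcon) (not_lt.mpr h0)
    refine ⟨⟨h0, ?_⟩, ⟨hw0', ?_⟩, ?_⟩
    · rw [le_div_iff₀ h1a]; nlinarith [mul_le_mul_of_nonneg_left hzM' ha0.le]
    · rw [le_div_iff₀ h1a]; nlinarith [mul_le_mul_of_nonneg_left hwM' ha0.le]
    · intro k hk
      by_cases hlo : (Tmap a)^[k] 0 ≤ (2*a-1)/(1-a)
      · -- below the hole: threshold maps to t_{k+1}
        have h1 : (Tmap a)^[k] 0 < 1 := myLtOne ⟨ha0, ha23⟩ k hlo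
        have hmem : (Tmap a)^[k] 0 ∉ Set.Ioo ((2*a-1)/(1-a)) 1 := fun hm => absurd hlo (not_le.mpr hm.1)
        have hk1 : ((k+1 : ℕ) : ℕ∞) ≤ kappa a 0 := myKappaSucc a k hk hmem
        have hT : (Tmap a)^[k+1] 0 = ((Tmap a)^[k] 0 + 1) / a := by
          rw [Function.iterate_succ_apply', Tmap, if_pos h1]
        have hiff := hc (k+1) hk1
        rw [hT, div_le_iff₀ ha0, div_le_iff₀ ha0] at hiff
        constructor <;> intro h
        · have : (Tmap a)^[k] 0 + 1 ≤ z * a := by linarith [mul_comm z a]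
          have := hiff.mp this
          nlinarith [this]
        · have : (Tmap a)^[k] 0 + 1 ≤ w * a := by linarith [mul_comm w a]
          have := hiff.mpr this
          nlinarith [this]
      · -- above the hole bottom: both comparisons are false
        push_neg at hlo
        have hlo' : 2*a-1 < (Tmap a)^[k] 0 * (1-a) := (div_lt_iff₀ h1a).mp hlo
        constructor <;> intro h
        · exfalso; nlinarith [mul_le_mul_of_nonneg_left hzM' ha0.le]
        · exfalso; nlinarith [mul_le_mul_of_nonneg_left hwM' ha0.le]

lemma myInfEq (P : ℕ → Prop) {n₀ : ℕ} (h : P n₀) (hmin : ∀ m < n₀, ¬ P m) :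
    (⨅ (n : ℕ) (_ : P n), (n : ℕ∞)) = n₀ := by
  refine le_antisymm (iInf₂_le n₀ h) (le_iInf₂ fun n hn => ?_)
  have : n₀ ≤ n := Nat.le_of_not_lt fun hlt => hmin n hlt hn
  exact_mod_cast this

lemma myInfTop (P : ℕ → Prop) (h : ∀ n, ¬ P n) : (⨅ (n : ℕ) (_ : P n), (n : ℕ∞)) = ⊤ :=
  iInf_eq_top.mpr fun n => iInf_eq_top.mpr fun hn => (h n hn).elim

lemma myCellOfF {a : ℝ} (u : ℕ → ℝ)
    (hupos : ∀ k : ℕ, (k : ℕ∞) ≤ kappa a 0 → 0 < u k)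
    (husum : Summable (fun k : ℕ => if (k : ℕ∞) ≤ kappa a 0 then u k else 0))
    {x y : ℝ} (hxy : x ≤ y)
    (hsum_eq : (∑' k : ℕ, if (k : ℕ∞) ≤ kappa a 0 ∧ (Tmap a)^[k] 0 ≤ x then u k else 0)
      = ∑' k : ℕ, if (k : ℕ∞) ≤ kappa a 0 ∧ (Tmap a)^[k] 0 ≤ y then u k else 0) :
    ∀ k : ℕ, (k : ℕ∞) ≤ kappa a 0 → ((Tmap a)^[k] 0 ≤ x ↔ (Tmap a)^[k] 0 ≤ y) := by
  have hbnd : ∀ z : ℝ, ∀ k : ℕ,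
      (if (k : ℕ∞) ≤ kappa a 0 ∧ (Tmap a)^[k] 0 ≤ z then u k else 0)
        ≤ (if (k : ℕ∞) ≤ kappa a 0 then u k else 0) := by
    intro z k
    by_cases h : (k : ℕ∞) ≤ kappa a 0 ∧ (Tmap a)^[k] 0 ≤ z
    · rw [if_pos h, if_pos h.1]
    · rw [if_neg h]
      by_cases h2 : (k : ℕ∞) ≤ kappa a 0
      · rw [if_pos h2]; exact (hupos k h2).le
      · rw [if_neg h2]
  have hnn0 : ∀ z : ℝ, ∀ k : ℕ,
      0 ≤ (if (k : ℕ∞) ≤ kappa a 0 ∧ (Tmap a)^[k] 0 ≤ z then u k else 0) := by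
    intro z k
    by_cases h : (k : ℕ∞) ≤ kappa a 0 ∧ (Tmap a)^[k] 0 ≤ z
    · rw [if_pos h]; exact (hupos k h.1).le
    · rw [if_neg h]
  set Fx : ℕ → ℝ := fun k => if (k : ℕ∞) ≤ kappa a 0 ∧ (Tmap a)^[k] 0 ≤ x then u k else 0 with hFx
  set Fy : ℕ → ℝ := fun k => if (k : ℕ∞) ≤ kappa a 0 ∧ (Tmap a)^[k] 0 ≤ y then u k else 0 with hFy
  have hsx : Summable Fx := Summable.of_nonneg_of_le (hnn0 x) (hbnd x) husum
  have hsy : Summable Fy := Summable.of_nonneg_of_le (hnn0 y) (hbnd y) husum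
  intro k hk
  constructor
  · exact fun h => h.trans hxy
  · intro hky
    by_contra hkx
    have hnn : ∀ j : ℕ, 0 ≤ Fy j - Fx j := by
      intro j
      rw [hFx, hFy]; dsimp only
      by_cases h : (j : ℕ∞) ≤ kappa a 0 ∧ (Tmap a)^[j] 0 ≤ x
      · rw [if_pos h, if_pos ⟨h.1, h.2.trans hxy⟩]
        linarith
      · rw [if_neg h]
        have := hnn0 y j
        linarith [hnn0 y j]
    have hsub : Summable (fun j => Fy j - Fx j) := hsy.sub hsx
    have htsum : (∑' j, (Fy j - Fx j)) = 0 := by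
      rw [Summable.tsum_sub hsy hsx, hsum_eq]; ring
    have hle : Fy k - Fx k ≤ 0 := htsum ▸ Summable.le_tsum hsub k (fun j _ => hnn j)
    have hFyk : Fy k = u k := by rw [hFy]; exact if_pos ⟨hk, hky⟩
    have hFxk : Fx k = 0 := by rw [hFx]; exact if_neg (fun h => hkx h.2)
    rw [hFyk, hFxk] at hle
    linarith [hupos k hk]

theorem coupling_of_lumped_values
    {Ω : Type*} [MeasurableSpace Ω] (μ : Measure Ω) [IsProbabilityMeasure μ]
    (a p : ℝ) (ha : a ∈ Set.Ioc (0 : ℝ) (2/3)) (hp : p ∈ Set.Ioo (0 : ℝ) 1)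
    (ξ : ℕ → Ω → ℝ) (hmeas : ∀ n, Measurable (ξ n))
    (hindep : iIndepFun ξ μ)
    (hdist1 : ∀ n, μ {ω | ξ n ω = 1} = ENNReal.ofReal p)
    (hdist2 : ∀ n, μ {ω | ξ n ω = -1} = ENNReal.ofReal (1 - p))
    (X : ℝ → ℕ → Ω → ℝ)
    (hX0 : ∀ x ω, X x 0 ω = x)
    (hXrec : ∀ x n ω, X x (n + 1) ω = a * X x n ω + ξ (n + 1) ω)
    (f : ℝ → ℝ) (hf : UplusMem a f)
    (x y : ℝ) (hx : x ∈ Set.Icc (0 : ℝ) (1 / (1 - a))) (hy : y ∈ Set.Icc (0 : ℝ) (1 / (1 - a)))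
    (hfxy : f x = f y) :
    ∀ᵐ ω ∂μ,
      (⨅ (n : ℕ) (_ : X x n ω < 0), (n : ℕ∞)) = (⨅ (n : ℕ) (_ : X y n ω < 0), (n : ℕ∞)) ∧
      ∀ n : ℕ, 1 ≤ n →
        f (X x (min (n : ℕ∞) (⨅ (m : ℕ) (_ : X x m ω < 0), (m : ℕ∞))).toNat ω)
          = f (X y (min (n : ℕ∞) (⨅ (m : ℕ) (_ : X y m ω < 0), (m : ℕ∞))).toNat ω) := by
  obtain ⟨u, hupos, husum, huf⟩ := hf
  -- cell equality of x and y
  have hcell : ∀ k : ℕ, (k : ℕ∞) ≤ kappa a 0 →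
      ((Tmap a)^[k] 0 ≤ x ↔ (Tmap a)^[k] 0 ≤ y) := by
    rcases le_total x y with hxy | hxy
    · exact myCellOfF u hupos husum hxy (by rw [← huf x, ← huf y, hfxy])
    · intro k hk
      exact (myCellOfF u hupos husum hxy (by rw [← huf y, ← huf x, hfxy]) k hk).symm
  -- f is determined by the cell
  have hfc : ∀ z w : ℝ,
      (∀ k : ℕ, (k:ℕ∞) ≤ kappa a 0 → ((Tmap a)^[k] 0 ≤ z ↔ (Tmap a)^[k] 0 ≤ w)) →
      f z = f w := by
    intro z w h
    rw [huf z, huf w]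
    refine tsum_congr fun k => ?_
    by_cases hk : (k:ℕ∞) ≤ kappa a 0
    · exact if_congr (and_congr_right fun _ => h k hk) rfl rfl
    · rw [if_neg (fun hcon => hk hcon.1), if_neg (fun hcon => hk hcon.1)]
  -- a.s. all ξ are ±1
  have hAE : ∀ᵐ ω ∂μ, ∀ n : ℕ, ξ n ω = 1 ∨ ξ n ω = -1 := by
    rw [ae_all_iff]
    intro n
    have hA : MeasurableSet {ω | ξ n ω = 1} := hmeas n (measurableSet_singleton 1)
    have hB : MeasurableSet {ω | ξ n ω = -1} := hmeas n (measurableSet_singleton (-1))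
    have hdisj : Disjoint {ω | ξ n ω = 1} {ω | ξ n ω = -1} := by
      rw [Set.disjoint_left]
      intro ω h1 h2
      simp only [Set.mem_setOf_eq] at h1 h2
      rw [h1] at h2; norm_num at h2
    have hunion : μ ({ω | ξ n ω = 1} ∪ {ω | ξ n ω = -1}) = 1 := by
      rw [measure_union hdisj hB, hdist1 n, hdist2 n,
        ← ENNReal.ofReal_add hp.1.le (by linarith [hp.2] : (0:ℝ) ≤ 1 - p)]
      norm_num
    apply ae_iff.mpr
    have hset : {ω | ¬(ξ n ω = 1 ∨ ξ n ω = -1)} = ({ω | ξ n ω = 1} ∪ {ω | ξ n ω = -1})ᶜ := by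
      ext ω; simp [not_or]
    rw [hset, measure_compl (hA.union hB) (measure_ne_top μ _), hunion, measure_univ]
    simp
  filter_upwards [hAE] with ω hω
  -- key coupled invariant
  have key : ∀ n : ℕ, ((∀ m ≤ n, 0 ≤ X x m ω) ∨ (∀ m ≤ n, 0 ≤ X y m ω)) →
      (∀ m ≤ n, 0 ≤ X x m ω) ∧ (∀ m ≤ n, 0 ≤ X y m ω) ∧
      X x n ω ∈ Set.Icc (0:ℝ) (1/(1-a)) ∧ X y n ω ∈ Set.Icc (0:ℝ) (1/(1-a)) ∧
      (∀ k : ℕ, (k:ℕ∞) ≤ kappa a 0 →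
        ((Tmap a)^[k] 0 ≤ X x n ω ↔ (Tmap a)^[k] 0 ≤ X y n ω)) := by
    intro n
    induction n with
    | zero =>
      intro _
      refine ⟨?_, ?_, ?_, ?_, ?_⟩
      · intro m hm; interval_cases m; rw [hX0]; exact hx.1
      · intro m hm; interval_cases m; rw [hX0]; exact hy.1
      · rw [hX0]; exact hx
      · rw [hX0]; exact hy
      · intro k hk; rw [hX0, hX0]; exact hcell k hk
    | succ n ih =>
      intro hyp
      have hyp' : (∀ m ≤ n, 0 ≤ X x m ω) ∨ (∀ m ≤ n, 0 ≤ X y m ω) := by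
        rcases hyp with h | h
        · exact Or.inl fun m hm => h m (hm.trans (Nat.le_succ n))
        · exact Or.inr fun m hm => h m (hm.trans (Nat.le_succ n))
      obtain ⟨hXx, hXy, hzI, hwI, hcc⟩ := ih hyp'
      have hstep := myStep ha (ξ (n+1) ω) (hω (n+1)) hzI hwI hcc
      rw [← hXrec x n ω, ← hXrec y n ω] at hstep
      have hx1 : 0 ≤ X x (n+1) ω := by
        rcases hyp with h | h
        · exact h (n+1) le_rfl
        · have h1 : 0 ≤ X y (n+1) ω := h (n+1) le_rfl
          by_contra hcon; push_neg at hcon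
          exact absurd (hstep.1.mp hcon) (not_lt.mpr h1)
      obtain ⟨hzI', hwI', hcc'⟩ := hstep.2 hx1
      refine ⟨?_, ?_, hzI', hwI', hcc'⟩
      · intro m hm
        rcases Nat.lt_succ_iff_lt_or_eq.mp (Nat.lt_succ_of_le hm) with h | h
        · exact hXx m (Nat.lt_succ_iff.mp h)
        · subst h; exact hx1
      · intro m hm
        rcases Nat.lt_succ_iff_lt_or_eq.mp (Nat.lt_succ_of_le hm) with h | h
        · exact hXy m (Nat.lt_succ_iff.mp h)
        · subst h; exact hwI'.1
  -- the exit equivalence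
  have exit_iff : ∀ n : ℕ, ((∀ m < n, 0 ≤ X x m ω) ∨ (∀ m < n, 0 ≤ X y m ω)) →
      (X x n ω < 0 ↔ X y n ω < 0) := by
    intro n
    cases n with
    | zero =>
      intro _
      rw [hX0, hX0]
      exact iff_of_false (not_lt.mpr hx.1) (not_lt.mpr hy.1)
    | succ n =>
      intro hyp
      have hyp' : (∀ m ≤ n, 0 ≤ X x m ω) ∨ (∀ m ≤ n, 0 ≤ X y m ω) := by
        rcases hyp with h | h
        · exact Or.inl fun m hm => h m (Nat.lt_succ_of_le hm)
        · exact Or.inr fun m hm => h m (Nat.lt_succ_of_le hm)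
      obtain ⟨_, _, hzI, hwI, hcc⟩ := key n hyp'
      have hstep := myStep ha (ξ (n+1) ω) (hω (n+1)) hzI hwI hcc
      rw [← hXrec x n ω, ← hXrec y n ω] at hstep
      exact hstep.1
  by_cases hex : ∃ n, X x n ω < 0
  · set n₀ := Nat.find hex with hn₀
    have hPx : X x n₀ ω < 0 := Nat.find_spec hex
    have hminx : ∀ m < n₀, ¬ X x m ω < 0 := fun m hm => Nat.find_min hex hm
    have hxnn : ∀ m < n₀, 0 ≤ X x m ω := fun m hm => not_lt.mp (hminx m hm)
    have hPy : X y n₀ ω < 0 := (exit_iff n₀ (Or.inl hxnn)).mp hPx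
    have hminy : ∀ m < n₀, ¬ X y m ω < 0 := by
      intro m hm hcon
      have := (exit_iff m (Or.inl (fun j hj => hxnn j (hj.trans hm)))).mpr hcon
      exact hminx m hm this
    have hτx : (⨅ (n : ℕ) (_ : X x n ω < 0), (n : ℕ∞)) = (n₀ : ℕ∞) :=
      myInfEq (fun n => X x n ω < 0) hPx hminx
    have hτy : (⨅ (n : ℕ) (_ : X y n ω < 0), (n : ℕ∞)) = (n₀ : ℕ∞) :=
      myInfEq (fun n => X y n ω < 0) hPy hminy
    refine ⟨by rw [hτx, hτy], ?_⟩
    intro n hn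
    rw [hτx, hτy]
    by_cases hcase : n₀ ≤ n
    · have hmin : min (n : ℕ∞) (n₀ : ℕ∞) = (n₀ : ℕ∞) :=
        min_eq_right (by exact_mod_cast hcase)
      rw [hmin, ENat.toNat_coe]
      apply hfc
      intro k hk
      have ht0 := (myOrbitIcc ha k hk).1
      exact iff_of_false (fun h => by linarith [hPx]) (fun h => by linarith [hPy])
    · push_neg at hcase
      have hmin : min (n : ℕ∞) (n₀ : ℕ∞) = (n : ℕ∞) :=
        min_eq_left (by exact_mod_cast hcase.le)
      rw [hmin, ENat.toNat_coe]
      have hxnn' : ∀ m ≤ n, 0 ≤ X x m ω := fun m hm => hxnn m (lt_of_le_of_lt hm hcase)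
      obtain ⟨_, _, _, _, hcc⟩ := key n (Or.inl hxnn')
      exact hfc _ _ hcc
  · push_neg at hex
    have hxnn : ∀ n, 0 ≤ X x n ω := hex
    have hynn : ∀ n, 0 ≤ X y n ω := by
      intro n
      by_contra hcon
      push_neg at hcon
      have hex' : ∃ m, X y m ω < 0 := ⟨n, hcon⟩
      have hPy : X y (Nat.find hex') ω < 0 := Nat.find_spec hex'
      have hynn' : ∀ m < Nat.find hex', 0 ≤ X y m ω :=
        fun m hm => not_lt.mp (Nat.find_min hex' hm)
      have := (exit_iff (Nat.find hex') (Or.inr hynn')).mpr hPy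
      exact absurd this (not_lt.mpr (hxnn _))
    have hτx : (⨅ (n : ℕ) (_ : X x n ω < 0), (n : ℕ∞)) = ⊤ :=
      myInfTop (fun n => X x n ω < 0) (fun n => not_lt.mpr (hxnn n))
    have hτy : (⨅ (n : ℕ) (_ : X y n ω < 0), (n : ℕ∞)) = ⊤ :=
      myInfTop (fun n => X y n ω < 0) (fun n => not_lt.mpr (hynn n))
    refine ⟨by rw [hτx, hτy], ?_⟩
    intro n hn
    rw [hτx, hτy, min_eq_left (le_top : (n:ℕ∞) ≤ ⊤), ENat.toNat_coe]
    obtain ⟨_, _, _, _, hcc⟩ := key n (Or.inl fun m _ => hxnn m)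
    exact hfc _ _ hcc

end
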